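/- Let S : ℝ → ℝ be defined by S(x) = 0 for x ≤ 0 and S(x) = 2x for x > 0, and let P = (-∞, 1). Then ⋂ n ≥ 0, S^[n] ⁻¹' P = (-∞, 0], its interior is (-∞, 0), and S ⁻¹' (-∞, 0) = ∅. In particular, interior (⋂ n, S^[n] ⁻¹' P) is not contained in S ⁻¹' (interior (⋂ n, S^[n] ⁻¹' P)). (This witnesses failure of the validity of □p → ○□p for weak henceforth.) -/

import Mathlib

noncomputable def S10 : ℝ → ℝ := fun x => if x ≤ 0 then 0 else 2 * x

lemma S10_nonneg (x : ℝ) : 0 ≤ S10 x := by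
  unfold S10; split <;> [rfl; linarith [not_le.mp (by assumption)]]

lemma S10_iter_pos (x : ℝ) (hx : 0 < x) (n : ℕ) : S10^[n] x = 2 ^ n * x := by
  induction n with
  | zero => simp
  | succ n ih =>
    rw [Function.iterate_succ_apply', ih]
    unfold S10
    have h2 : (0:ℝ) < 2 ^ n * x := by positivity
    simp [not_le.mpr h2, h2.not_ge]
    ring

lemma S10_iter_nonpos (x : ℝ) (hx : x ≤ 0) (n : ℕ) : S10^[n] x ≤ 0 := by
  cases n with
  | zero => simpa
  | succ n =>
    rw [Function.iterate_succ_apply]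
    have : S10 x = 0 := by unfold S10; simp [hx]
    rw [this]
    induction n with
    | zero => simp
    | succ m ih =>
      rw [Function.iterate_succ_apply]
      have : S10 (0:ℝ) = 0 := by unfold S10; simp
      rw [this]; exact ih

lemma inter_eq : (⋂ n : ℕ, S10^[n] ⁻¹' Set.Iio (1 : ℝ)) = Set.Iic (0 : ℝ) := by
  ext x
  simp only [Set.mem_iInter, Set.mem_preimage, Set.mem_Iio, Set.mem_Iic]
  constructor
  · intro h
    by_contra hx
    push_neg at hx
    obtain ⟨n, hn⟩ := pow_unbounded_of_one_lt (R := ℝ) (1/x) (by norm_num : (1:ℝ) < 2)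
    have := h n
    rw [S10_iter_pos x hx n] at this
    rw [div_lt_iff₀ hx] at hn
    nlinarith
  · intro hx n
    exact lt_of_le_of_lt (S10_iter_nonpos x hx n) one_pos

theorem weak_henceforth_next_failure :
    (⋂ n : ℕ, S10^[n] ⁻¹' Set.Iio (1 : ℝ)) = Set.Iic (0 : ℝ) ∧
    interior (⋂ n : ℕ, S10^[n] ⁻¹' Set.Iio (1 : ℝ)) = Set.Iio (0 : ℝ) ∧
    S10 ⁻¹' Set.Iio (0 : ℝ) = ∅ ∧
    ¬ interior (⋂ n : ℕ, S10^[n] ⁻¹' Set.Iio (1 : ℝ)) ⊆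
        S10 ⁻¹' interior (⋂ n : ℕ, S10^[n] ⁻¹' Set.Iio (1 : ℝ)) := by
  have hpre : S10 ⁻¹' Set.Iio (0 : ℝ) = ∅ := by
    ext x; simp [Set.mem_preimage, not_lt.mpr (S10_nonneg x)]
  refine ⟨inter_eq, by rw [inter_eq, interior_Iic], hpre, ?_⟩
  rw [inter_eq, interior_Iic, hpre]
  intro h
  exact h (show (-1:ℝ) ∈ Set.Iio 0 by norm_num)
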